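/- Let a,b,c,d ∈ ℚ with ad − bc ≠ 0. Let (u₁,v₁), (u₂,v₂) ∈ ℚ² with (u₁,v₁) ≠ (0,0) and (u₂,v₂) ≠ (0,0), such that a·u₁·u₂ + b·u₁·v₂ + c·v₁·u₂ + d·v₁·v₂ = 0 and there exist w₁, w₂ ∈ ℚ with u₁² + v₁² = w₁² and u₂² + v₂² = w₂². Then there exist (x,y,z) ∈ ℚ³ with (x,z) ≠ (0,0) satisfying y² = (a(z² − x²) + 2bxz)² + (c(z² − x²) + 2dxz)², together with nonzero μ, ν ∈ ℚ such that (z² − x², 2xz) = (μ·u₂, μ·v₂) and (−c(z² − x²) − 2dxz, a(z² − x²) + 2bxz) = (ν·u₁, ν·v₁). -/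
import Mathlib


theorem stmt_13 (a b c d : ℚ) (hdet : a * d - b * c ≠ 0)
    (u₁ v₁ u₂ v₂ : ℚ) (h₁ : (u₁, v₁) ≠ (0, 0)) (h₂ : (u₂, v₂) ≠ (0, 0))
    (hF : a * u₁ * u₂ + b * u₁ * v₂ + c * v₁ * u₂ + d * v₁ * v₂ = 0)
    (hw₁ : ∃ w₁ : ℚ, u₁ ^ 2 + v₁ ^ 2 = w₁ ^ 2) (hw₂ : ∃ w₂ : ℚ, u₂ ^ 2 + v₂ ^ 2 = w₂ ^ 2) :
    ∃ x y z : ℚ, (x, z) ≠ (0, 0) ∧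
      y ^ 2 = (a * (z ^ 2 - x ^ 2) + 2 * b * x * z) ^ 2 +
        (c * (z ^ 2 - x ^ 2) + 2 * d * x * z) ^ 2 ∧
      ∃ μ ν : ℚ, μ ≠ 0 ∧ ν ≠ 0 ∧
        (z ^ 2 - x ^ 2, 2 * x * z) = (μ * u₂, μ * v₂) ∧
        (-c * (z ^ 2 - x ^ 2) - 2 * d * x * z, a * (z ^ 2 - x ^ 2) + 2 * b * x * z) =
          (ν * u₁, ν * v₁) := by
  obtain ⟨w₁, hW₁⟩ := hw₁
  obtain ⟨w, hW⟩ := hw₂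
  -- choose sign of w so that u₂ + w ≠ 0
  obtain ⟨w₂, hW₂, hz⟩ : ∃ w₂ : ℚ, u₂ ^ 2 + v₂ ^ 2 = w₂ ^ 2 ∧ u₂ + w₂ ≠ 0 := by
    by_cases h : u₂ + w ≠ 0
    · exact ⟨w, hW, h⟩
    · refine ⟨-w, by rw [hW]; ring, ?_⟩
      push_neg at h
      intro h'
      have hu : u₂ = 0 := by linarith
      have hwz : w = 0 := by linarith
      have hv : v₂ = 0 := by
        have h2 : v₂ ^ 2 = 0 := by rw [hu, hwz] at hW; simpa using hW
        exact pow_eq_zero_iff (n := 2) (by norm_num) |>.mp h2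
      exact h₂ (by simp [hu, hv])
  have hXY : u₁ * (a * u₂ + b * v₂) + v₁ * (c * u₂ + d * v₂) = 0 := by linarith [hF]
  have hXYne : ¬(a * u₂ + b * v₂ = 0 ∧ c * u₂ + d * v₂ = 0) := by
    rintro ⟨hx0, hy0⟩
    have hu2 : (a * d - b * c) * u₂ = 0 := by linear_combination d * hx0 - b * hy0
    have hv2 : (a * d - b * c) * v₂ = 0 := by linear_combination a * hy0 - c * hx0
    have hu2' : u₂ = 0 := by rcases mul_eq_zero.mp hu2 with h | h; exact absurd h hdet; exact h
    have hv2' : v₂ = 0 := by rcases mul_eq_zero.mp hv2 with h | h; exact absurd h hdet; exact h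
    exact h₂ (by simp [hu2', hv2'])
  -- find t with a*u₂+b*v₂ = t * v₁ and c*u₂+d*v₂ = -t * u₁
  obtain ⟨t, ht1, ht2⟩ : ∃ t : ℚ, a * u₂ + b * v₂ = t * v₁ ∧ c * u₂ + d * v₂ = -t * u₁ := by
    by_cases hv1 : v₁ = 0
    · have hu1 : u₁ ≠ 0 := by intro h; exact h₁ (by simp [h, hv1])
      refine ⟨-(c * u₂ + d * v₂) / u₁, ?_, ?_⟩
      · have h3 : u₁ * (a * u₂ + b * v₂) = 0 := by rw [hv1] at hXY; linarith
        rcases mul_eq_zero.mp h3 with h | h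
        · exact absurd h hu1
        · rw [h, hv1]; ring
      · field_simp
    · refine ⟨(a * u₂ + b * v₂) / v₁, ?_, ?_⟩
      · field_simp
      · field_simp
        linear_combination hXY
  have ht : t ≠ 0 := by
    intro h
    exact hXYne ⟨by rw [ht1, h]; ring, by rw [ht2, h]; ring⟩
  have hμne : (2 * (u₂ + w₂) : ℚ) ≠ 0 := by
    intro h; apply hz; linarith
  have hνne : (2 * (u₂ + w₂) * t : ℚ) ≠ 0 := mul_ne_zero hμne ht
  refine ⟨v₂, 2 * (u₂ + w₂) * t * w₁, u₂ + w₂, ?_, ?_, 2 * (u₂ + w₂), 2 * (u₂ + w₂) * t,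
    hμne, hνne, ?_, ?_⟩
  · intro h
    have h4 := congrArg Prod.snd h
    simp at h4
    exact hz h4
  · have hA : a * ((u₂ + w₂) ^ 2 - v₂ ^ 2) + 2 * b * v₂ * (u₂ + w₂) = 2 * (u₂ + w₂) * t * v₁ := by
      linear_combination (2 * (u₂ + w₂)) * ht1 - a * hW₂
    have hC : c * ((u₂ + w₂) ^ 2 - v₂ ^ 2) + 2 * d * v₂ * (u₂ + w₂) =
        -(2 * (u₂ + w₂) * t * u₁) := by
      linear_combination (2 * (u₂ + w₂)) * ht2 - c * hW₂
    rw [hA, hC]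
    linear_combination (-(2 * (u₂ + w₂) * t) ^ 2) * hW₁
  · rw [Prod.mk.injEq]
    constructor
    · linear_combination -hW₂
    · ring
  · rw [Prod.mk.injEq]
    constructor
    · linear_combination (-(2 * (u₂ + w₂))) * ht2 + c * hW₂
    · linear_combination (2 * (u₂ + w₂)) * ht1 - a * hW₂
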